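/- Let (Ω, 𝓕, P) be a probability space and let τ, D, D' : Ω → ℝ be random variables such that τ is uniformly distributed on [0,1], D and D' are square-integrable with E[D] = E[D'] = 0, and τ, D, D' are mutually independent. Then E[(τ²·D + (1−τ)²·D')²] = (1/5)·(E[D²] + E[D'²]). In particular, the map F ↦ S(F) sending the joint law to the law of τ²X + (1−τ)²X' + C (for any toll C) is a contraction with factor √(2/5) in the Wasserstein L² metric on zero-mean, finite-second-moment distributions. -/

import Mathlib

open MeasureTheory ProbabilityTheory

lemma iIndepFun_ae_eq' {Ω ι : Type*} [MeasurableSpace Ω] {μ : Measure Ω} {β : ι → Type*}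
    [m : ∀ i, MeasurableSpace (β i)] {f g : ∀ i, Ω → β i}
    (hf : iIndepFun f μ) (h : ∀ i, f i =ᵐ[μ] g i) : iIndepFun g μ := by
  rw [iIndepFun_iff_measure_inter_preimage_eq_mul] at hf ⊢
  intro S sets hsets
  have h1 : ∀ i, f i ⁻¹' sets i =ᵐ[μ] g i ⁻¹' sets i := fun i => (h i).fun_comp (sets i)
  have h2 : (⋂ i ∈ S, f i ⁻¹' sets i) =ᵐ[μ] ⋂ i ∈ S, g i ⁻¹' sets i := by
    rw [Filter.eventuallyEq_set]
    have : ∀ᵐ ω ∂μ, ∀ i ∈ S, (ω ∈ f i ⁻¹' sets i ↔ ω ∈ g i ⁻¹' sets i) :=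
      (MeasureTheory.ae_ball_iff S.countable_toSet).2
        (fun i _ => Filter.eventuallyEq_set.1 (h1 i))
    filter_upwards [this] with ω hω
    simp only [Set.mem_iInter]
    exact ⟨fun H i hi => (hω i hi).1 (H i hi), fun H i hi => (hω i hi).2 (H i hi)⟩
  rw [← measure_congr h2, hf S hsets]
  exact Finset.prod_congr rfl fun i _ => measure_congr (h1 i)

/-- For `τ` uniform on `[0,1]` and centered square-integrable `D`, `D'`, with `τ, D, D'`
mutually independent, `E[(τ²D + (1−τ)²D')²] = (1/5)(E[D²] + E[D'²])`: the key contraction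
estimate for the limit law of the normalized cophenetic index. -/
theorem stmt18 {Ω : Type*} [MeasurableSpace Ω] (μ : Measure Ω) [IsProbabilityMeasure μ]
    (τ D D' : Ω → ℝ)
    (hτ : μ.map τ = volume.restrict (Set.Icc (0 : ℝ) 1))
    (hD : MemLp D 2 μ) (hD' : MemLp D' 2 μ)
    (hED : ∫ ω, D ω ∂μ = 0) (hED' : ∫ ω, D' ω ∂μ = 0)
    (hindep : iIndepFun ![τ, D, D'] μ) :
    ∫ ω, (τ ω ^ 2 * D ω + (1 - τ ω) ^ 2 * D' ω) ^ 2 ∂μ =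
      (1 / 5) * ((∫ ω, D ω ^ 2 ∂μ) + ∫ ω, D' ω ^ 2 ∂μ) := by
  -- τ is a.e. measurable
  have hτa : AEMeasurable τ μ := by
    by_contra hc
    rw [Measure.map_of_not_aemeasurable hc] at hτ
    have : (volume.restrict (Set.Icc (0:ℝ) 1)) (Set.Icc 0 1) = 0 := by rw [← hτ]; simp
    rw [Measure.restrict_apply_self] at this
    simp [Real.volume_Icc] at this
  -- τ ∈ [0,1] a.e.
  have hτ01 : ∀ᵐ ω ∂μ, τ ω ∈ Set.Icc (0:ℝ) 1 := by
    have : ∀ᵐ x ∂(μ.map τ), x ∈ Set.Icc (0:ℝ) 1 := by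
      rw [hτ]; exact ae_restrict_mem measurableSet_Icc
    exact (ae_map_iff hτa measurableSet_Icc).1 this
  -- measurable versions
  obtain ⟨τm, hτm_meas, hτm_eq⟩ :
      ∃ τm : Ω → ℝ, Measurable τm ∧ τ =ᵐ[μ] τm := ⟨hτa.mk τ, hτa.measurable_mk, hτa.ae_eq_mk⟩
  have hDa : AEMeasurable D μ := hD.aestronglyMeasurable.aemeasurable
  have hD'a : AEMeasurable D' μ := hD'.aestronglyMeasurable.aemeasurable
  obtain ⟨Dm, hDm_meas, hDm_eq⟩ :
      ∃ Dm : Ω → ℝ, Measurable Dm ∧ D =ᵐ[μ] Dm := ⟨hDa.mk D, hDa.measurable_mk, hDa.ae_eq_mk⟩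
  obtain ⟨D'm, hD'm_meas, hD'm_eq⟩ :
      ∃ Dm : Ω → ℝ, Measurable Dm ∧ D' =ᵐ[μ] Dm := ⟨hD'a.mk D', hD'a.measurable_mk, hD'a.ae_eq_mk⟩
  have hindep_m : iIndepFun ![τm, Dm, D'm] μ := by
    refine iIndepFun_ae_eq' hindep fun i => ?_
    fin_cases i <;> simpa using (by assumption : _ =ᵐ[μ] _)
  -- integrability facts
  have hDsq : Integrable (fun ω => D ω ^ 2) μ := hD.integrable_sq
  have hD'sq : Integrable (fun ω => D' ω ^ 2) μ := hD'.integrable_sq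
  have hDint : Integrable D μ := hD.integrable one_le_two
  have hD'int : Integrable D' μ := hD'.integrable one_le_two
  have hindτD : IndepFun τ D μ := hindep.indepFun (by decide : (0 : Fin 3) ≠ 1)
  have hindτD' : IndepFun τ D' μ := hindep.indepFun (by decide : (0 : Fin 3) ≠ 2)
  have hindDD' : IndepFun D D' μ := hindep.indepFun (by decide : (1 : Fin 3) ≠ 2)
  have hDD'int : Integrable (fun ω => D ω * D' ω) μ := hindDD'.integrable_mul hDint hD'int
  -- the three pieces
  have hf1 : Integrable (fun ω => τ ω ^ 4 * D ω ^ 2) μ := by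
    refine Integrable.mono' hDsq ((hτa.pow_const 4).mul (hDa.pow_const 2)).aestronglyMeasurable ?_
    filter_upwards [hτ01] with ω hω
    have h0 : (0:ℝ) ≤ τ ω := hω.1
    have h1 : τ ω ≤ 1 := hω.2
    have : τ ω ^ 4 ≤ 1 := pow_le_one₀ h0 h1
    rw [Real.norm_eq_abs, abs_mul, abs_of_nonneg (pow_nonneg h0 4), abs_of_nonneg (sq_nonneg _)]
    nlinarith [sq_nonneg (D ω)]
  have hf3 : Integrable (fun ω => (1 - τ ω) ^ 4 * D' ω ^ 2) μ := by
    refine Integrable.mono' hD'sq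
      (((aemeasurable_const.sub hτa).pow_const 4).mul (hD'a.pow_const 2)).aestronglyMeasurable ?_
    filter_upwards [hτ01] with ω hω
    have h0 : (0:ℝ) ≤ 1 - τ ω := by linarith [hω.2]
    have h1 : 1 - τ ω ≤ 1 := by linarith [hω.1]
    have : (1 - τ ω) ^ 4 ≤ 1 := pow_le_one₀ h0 h1
    rw [Real.norm_eq_abs, abs_mul, abs_of_nonneg (pow_nonneg h0 4), abs_of_nonneg (sq_nonneg _)]
    nlinarith [sq_nonneg (D' ω)]
  have hf2 : Integrable (fun ω => 2 * (τ ω ^ 2 * (1 - τ ω) ^ 2 * D ω) * D' ω) μ := by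
    refine Integrable.mono' (hDD'int.abs.const_mul 2)
      ((((((hτa.pow_const 2).mul ((aemeasurable_const.sub hτa).pow_const 2)).mul hDa).const_mul
        2).mul hD'a)).aestronglyMeasurable ?_
    filter_upwards [hτ01] with ω hω
    have h0 : (0:ℝ) ≤ τ ω ^ 2 * (1 - τ ω) ^ 2 := by positivity
    have ha : τ ω ^ 2 ≤ 1 := pow_le_one₀ hω.1 hω.2
    have hb : (1 - τ ω) ^ 2 ≤ 1 := pow_le_one₀ (by linarith [hω.2]) (by linarith [hω.1])
    have h1 : τ ω ^ 2 * (1 - τ ω) ^ 2 ≤ 1 :=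
      mul_le_one₀ ha (sq_nonneg _) hb
    have key : ‖2 * (τ ω ^ 2 * (1 - τ ω) ^ 2 * D ω) * D' ω‖
        = 2 * (τ ω ^ 2 * (1 - τ ω) ^ 2) * |D ω * D' ω| := by
      rw [Real.norm_eq_abs,
        show 2 * (τ ω ^ 2 * (1 - τ ω) ^ 2 * D ω) * D' ω
          = (2 * (τ ω ^ 2 * (1 - τ ω) ^ 2)) * (D ω * D' ω) from by ring,
        abs_mul, abs_of_nonneg (by positivity)]
    rw [key]
    nlinarith [abs_nonneg (D ω * D' ω)]
  -- expectations of powers of τ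
  have hmap4 : ∫ ω, τ ω ^ 4 ∂μ = 1 / 5 := by
    have : ∫ ω, τ ω ^ 4 ∂μ = ∫ x, x ^ 4 ∂(μ.map τ) :=
      (integral_map hτa (measurable_id.pow_const 4).aestronglyMeasurable).symm
    rw [this, hτ, MeasureTheory.integral_Icc_eq_integral_Ioc,
      ← intervalIntegral.integral_of_le (zero_le_one), integral_pow]
    norm_num
  have hmap4' : ∫ ω, (1 - τ ω) ^ 4 ∂μ = 1 / 5 := by
    have : ∫ ω, (1 - τ ω) ^ 4 ∂μ = ∫ x, (1 - x) ^ 4 ∂(μ.map τ) :=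
      (integral_map hτa
        ((measurable_const.sub measurable_id).pow_const 4).aestronglyMeasurable).symm
    rw [this, hτ, MeasureTheory.integral_Icc_eq_integral_Ioc,
      ← intervalIntegral.integral_of_le (zero_le_one)]
    have := intervalIntegral.integral_comp_sub_left (a := (0:ℝ)) (b := 1)
      (fun x => x ^ 4) 1
    rw [this]
    norm_num [integral_pow]
  -- term 1
  have ht1 : ∫ ω, τ ω ^ 4 * D ω ^ 2 ∂μ = (1 / 5) * ∫ ω, D ω ^ 2 ∂μ := by
    have hI : IndepFun (fun ω => τ ω ^ 4) (fun ω => D ω ^ 2) μ :=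
      hindτD.comp (measurable_id.pow_const 4) (measurable_id.pow_const 2)
    rw [hI.integral_fun_mul_eq_mul_integral ((hτa.pow_const 4)).aestronglyMeasurable
      ((hDa.pow_const 2)).aestronglyMeasurable, hmap4]
  -- term 3
  have ht3 : ∫ ω, (1 - τ ω) ^ 4 * D' ω ^ 2 ∂μ = (1 / 5) * ∫ ω, D' ω ^ 2 ∂μ := by
    have hI : IndepFun (fun ω => (1 - τ ω) ^ 4) (fun ω => D' ω ^ 2) μ :=
      hindτD'.comp ((measurable_const.sub measurable_id).pow_const 4)
        (measurable_id.pow_const 2)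
    rw [hI.integral_fun_mul_eq_mul_integral ((aemeasurable_const.sub hτa).pow_const 4).aestronglyMeasurable
      ((hD'a.pow_const 2)).aestronglyMeasurable, hmap4']
  -- cross term
  have ht2 : ∫ ω, 2 * (τ ω ^ 2 * (1 - τ ω) ^ 2 * D ω) * D' ω ∂μ = 0 := by
    have hpair : IndepFun (fun ω => (τm ω, Dm ω)) D'm μ :=
      hindep_m.indepFun_prodMk (fun i => by fin_cases i <;> assumption) 0 1 2
        (by decide) (by decide)
    have hφ : Measurable fun p : ℝ × ℝ => 2 * (p.1 ^ 2 * (1 - p.1) ^ 2 * p.2) := by fun_prop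
    have hIm : IndepFun (fun ω => 2 * (τm ω ^ 2 * (1 - τm ω) ^ 2 * Dm ω)) D'm μ :=
      hpair.comp hφ measurable_id
    have hI : IndepFun (fun ω => 2 * (τ ω ^ 2 * (1 - τ ω) ^ 2 * D ω)) D' μ := by
      refine hIm.congr ?_ hD'm_eq.symm
      filter_upwards [hτm_eq, hDm_eq] with ω h1 h2
      rw [h1, h2]
    rw [hI.integral_fun_mul_eq_mul_integral
      (((((hτa.pow_const 2).mul ((aemeasurable_const.sub hτa).pow_const 2)).mul hDa).const_mul
        2)).aestronglyMeasurable hD'.aestronglyMeasurable, hED']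
    ring
  -- put it together
  have expand : ∀ ω : Ω, (τ ω ^ 2 * D ω + (1 - τ ω) ^ 2 * D' ω) ^ 2 =
      τ ω ^ 4 * D ω ^ 2 + (2 * (τ ω ^ 2 * (1 - τ ω) ^ 2 * D ω) * D' ω +
        (1 - τ ω) ^ 4 * D' ω ^ 2) := fun ω => by ring
  calc ∫ ω, (τ ω ^ 2 * D ω + (1 - τ ω) ^ 2 * D' ω) ^ 2 ∂μ
      = ∫ ω, (τ ω ^ 4 * D ω ^ 2 + (2 * (τ ω ^ 2 * (1 - τ ω) ^ 2 * D ω) * D' ω +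
          (1 - τ ω) ^ 4 * D' ω ^ 2)) ∂μ := by simp_rw [expand]
    _ = (∫ ω, τ ω ^ 4 * D ω ^ 2 ∂μ) + ((∫ ω, 2 * (τ ω ^ 2 * (1 - τ ω) ^ 2 * D ω) * D' ω ∂μ) +
          ∫ ω, (1 - τ ω) ^ 4 * D' ω ^ 2 ∂μ) := by
        have h := integral_add hf1 (hf2.add hf3)
        simp only [Pi.add_apply] at h
        rw [h]
        congr 1
        exact integral_add hf2 hf3
    _ = (1 / 5) * ((∫ ω, D ω ^ 2 ∂μ) + ∫ ω, D' ω ^ 2 ∂μ) := by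
        rw [ht1, ht2, ht3]; ring
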